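/- Let φ be the (m+1)-dimensional irreducible representation of sl(2,ℂ). Then for all complex z₀, z₁: det(z₀·I + z₁·φ(h) + φ(e₁) + φ(e₂)) = ∏_{i=0}^{m} (z₀ + (m - 2i)·√(1 + z₁²)), where √(1+z₁²) is a fixed square root. -/

import Mathlib

open Matrix

/-- `φ(h)` for the irreducible representation of highest weight `m`. -/
def phiH (m : ℕ) : Matrix (Fin (m + 1)) (Fin (m + 1)) ℂ :=
  Matrix.diagonal fun i => (m : ℂ) - 2 * (i : ℕ)

/-- `φ(e₁)`: `φ(e₁) v_i = (m - i + 1) v_{i-1}`. -/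
def phiE (m : ℕ) : Matrix (Fin (m + 1)) (Fin (m + 1)) ℂ :=
  Matrix.of fun i j => if (i : ℕ) + 1 = (j : ℕ) then (m : ℂ) - (j : ℕ) + 1 else 0

/-- `φ(e₂)`: `φ(e₂) v_i = (i + 1) v_{i+1}`. -/
def phiF (m : ℕ) : Matrix (Fin (m + 1)) (Fin (m + 1)) ℂ :=
  Matrix.of fun i j => if (j : ℕ) + 1 = (i : ℕ) then ((j : ℕ) + 1 : ℂ) else 0

set_option maxHeartbeats 1000000
section HuZhangAux
open Polynomial

-- auxiliary: C n * (q * q^(n-1)) = C n * q^n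
lemma aux_pow (q : Polynomial ℂ) (n : ℕ) :
    C (n:ℂ) * (q * q^(n-1)) = C (n:ℂ) * q^n := by
  cases n with
  | zero => simp
  | succ k => rw [Nat.add_sub_cancel, ← pow_succ']

lemma polyKey (a b : ℂ) (N K : ℕ) :
    (-((X + C a) * (X + C b))) * derivative ((X + C a)^N * (X + C b)^K)
      = (-(C (N:ℂ) * (X + C b) + C (K:ℂ) * (X + C a))) * ((X + C a)^N * (X + C b)^K) := by
  rw [derivative_mul, derivative_pow, derivative_pow]
  simp only [derivative_X_add_C, mul_one]
  have h1 := aux_pow (X + C a) N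
  have h2 := aux_pow (X + C b) K
  ring_nf
  ring_nf at h1 h2
  linear_combination (-(X + C b) * (X + C b)^K) * h1 + (-(X + C a) * (X + C a)^N) * h2

lemma step1 (m k : ℕ) (hk : k ≤ m) (z₁ s : ℂ) (hs : s^2 = 1 + z₁^2) :
    (C 1 + C (2*z₁) * X - X^2) * derivative ((X + C (s - z₁))^(m-k) * (X + C (-s - z₁))^k)
      = (C (((m:ℂ) - 2*k)*s + (m:ℂ)*z₁) - C (m:ℂ) * X)
        * ((X + C (s - z₁))^(m-k) * (X + C (-s - z₁))^k) := by
  have h := polyKey (s - z₁) (-s - z₁) (m-k) k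
  have hmk : (((m - k : ℕ)) : ℂ) = (m:ℂ) - (k:ℂ) := by
    push_cast [hk]; ring
  rw [hmk] at h
  have hC : (C s : Polynomial ℂ)^2 = 1 + (C z₁)^2 := by
    rw [← map_pow, hs]; simp [map_add, map_pow]
  simp only [map_sub, map_add, _root_.map_mul, map_neg, _root_.map_one, map_ofNat, map_natCast] at h ⊢
  linear_combination h - (derivative ((X + (C s - C z₁))^(m-k) * (X + (-C s - C z₁))^k)) * hC

lemma coeff_X_sq_mul_derivative (p : Polynomial ℂ) (j : ℕ) :
    (X^2 * derivative p).coeff (j+1) = (j:ℂ) * (p.coeff j) := by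
  cases j with
  | zero =>
    have : (X^2 * derivative p) = X * (X * derivative p) := by ring
    rw [this, coeff_X_mul, mul_coeff_zero, coeff_X_zero]
    simp
  | succ i =>
    have : i + 1 + 1 = i + 2 := rfl
    rw [this, coeff_X_pow_mul, coeff_derivative]
    push_cast; ring

lemma coeff_rel (p : Polynomial ℂ) (a b d : ℂ)
    (h : (C 1 + C a * X - X^2) * derivative p = (C b - C d * X) * p) :
    (p.coeff 1 = b * p.coeff 0) ∧
    ∀ j : ℕ, ((j:ℂ)+2)*(p.coeff (j+2)) + a*((j:ℂ)+1)*(p.coeff (j+1)) - (j:ℂ)*(p.coeff j)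
      = b*(p.coeff (j+1)) - d*(p.coeff j) := by
  have expand : ∀ n : ℕ, ((C 1 + C a * X - X^2) * derivative p).coeff n
      = ((C b - C d * X) * p).coeff n := fun n => by rw [h]
  constructor
  · have h0 := expand 0
    simp only [sub_mul, add_mul, one_mul, coeff_sub, coeff_add, mul_coeff_zero,
      coeff_C_zero, coeff_X_zero, coeff_derivative] at h0
    have hX : (C a * X * derivative p) = C a * (X * derivative p) := by ring
    have hX2 : (X^2 * derivative p).coeff 0 = 0 := by
      have : (X^2 * derivative p) = X * (X * derivative p) := by ring
      rw [this, mul_coeff_zero, coeff_X_zero]; ring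
    have hXp : (C d * X * p).coeff 0 = 0 := by
      have : (C d * X * p) = C d * (X * p) := by ring
      rw [this, coeff_C_mul, mul_coeff_zero, coeff_X_zero]; ring
    have h0' := expand 0
    simp only [sub_mul, add_mul, one_mul, coeff_sub, coeff_add] at h0'
    rw [hX2, hXp] at h0'
    have hXd : (C a * X * derivative p).coeff 0 = 0 := by
      rw [hX, coeff_C_mul, mul_coeff_zero, coeff_X_zero]; ring
    rw [hXd] at h0'
    simpa [coeff_derivative] using h0'
  · intro j
    have hn := expand (j+1)
    simp only [sub_mul, add_mul, one_mul, coeff_sub, coeff_add] at hn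
    have e1 : (C a * X * derivative p).coeff (j+1) = a * (((j:ℂ)+1) * p.coeff (j+1)) := by
      have : (C a * X * derivative p) = C a * (X * derivative p) := by ring
      rw [this, coeff_C_mul, coeff_X_mul, coeff_derivative]; ring
    have e2 : (C d * X * p).coeff (j+1) = d * p.coeff j := by
      have : (C d * X * p) = C d * (X * p) := by ring
      rw [this, coeff_C_mul, coeff_X_mul]
    rw [e1, e2, coeff_X_sq_mul_derivative] at hn
    simp only [C_1, one_mul, coeff_derivative, coeff_C_mul] at hn
    push_cast at hn ⊢
    linear_combination hn
open Matrix Polynomial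

lemma mulVec_phiE (m : ℕ) (w : Fin (m+1) → ℂ) (i : Fin (m+1)) :
    (phiE m).mulVec w i = ((m:ℂ) - (i:ℕ)) * w ⟨min ((i:ℕ)+1) m, by omega⟩ := by
  rcases lt_or_ge (i:ℕ) m with hi | hi
  · have hmin : min ((i:ℕ)+1) m = (i:ℕ)+1 := by omega
    rw [Matrix.mulVec, dotProduct]
    rw [Finset.sum_eq_single (⟨(i:ℕ)+1, by omega⟩ : Fin (m+1))]
    · simp only [phiE, Matrix.of_apply, if_pos rfl]
      have : (⟨min ((i:ℕ)+1) m, by omega⟩ : Fin (m+1)) = ⟨(i:ℕ)+1, by omega⟩ :=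
        Fin.ext hmin
      rw [this]
      congr 1
      push_cast; ring
    · intro b _ hb
      simp only [phiE, Matrix.of_apply]
      rw [if_neg, zero_mul]
      intro hcon; exact hb (Fin.ext hcon.symm)
    · intro h; exact absurd (Finset.mem_univ _) h
  · have him : (i:ℕ) = m := by omega
    rw [Matrix.mulVec, dotProduct, Finset.sum_eq_zero, show ((i:ℕ):ℂ) = (m:ℂ) by rw [him]]
    · ring
    · intro j _
      simp only [phiE, Matrix.of_apply]
      rw [if_neg, zero_mul]
      have := j.isLt; omega

lemma mulVec_phiF (m : ℕ) (w : Fin (m+1) → ℂ) (i : Fin (m+1)) :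
    (phiF m).mulVec w i = ((i:ℕ):ℂ) * w ⟨(i:ℕ) - 1, by omega⟩ := by
  rcases Nat.eq_zero_or_pos (i:ℕ) with hi | hi
  · rw [Matrix.mulVec, dotProduct, Finset.sum_eq_zero]
    · have : ((i:ℕ):ℂ) = 0 := by rw [hi]; simp
      rw [this, zero_mul]
    · intro j _
      simp only [phiF, Matrix.of_apply]
      rw [if_neg (by omega), zero_mul]
  · rw [Matrix.mulVec, dotProduct]
    rw [Finset.sum_eq_single (⟨(i:ℕ)-1, by omega⟩ : Fin (m+1))]
    · simp only [phiF, Matrix.of_apply]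
      rw [if_pos (by omega)]
      congr 1
      rw [Nat.cast_sub hi]
      push_cast; ring
    · intro b _ hb
      simp only [phiF, Matrix.of_apply]
      rw [if_neg, zero_mul]
      intro hcon; apply hb; apply Fin.ext
      show (b:ℕ) = (i:ℕ) - 1
      omega
    · intro h; exact absurd (Finset.mem_univ _) h

section Eigen
variable (m k : ℕ) (z₀ z₁ s : ℂ)

/-- the eigen-polynomial -/
noncomputable def pk : Polynomial ℂ := (X + C (s - z₁))^(m-k) * (X + C (-s - z₁))^k

/-- factorial-weighted eigenvector components -/
noncomputable def vk : Fin (m+1) → ℂ :=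
  fun i => (pk m k z₁ s).coeff (m - (i:ℕ)) * ((i:ℕ).factorial : ℂ) * ((m - (i:ℕ)).factorial : ℂ)

lemma pk_natDegree (hk : k ≤ m) : (pk m k z₁ s).natDegree = m := by
  rw [pk, natDegree_mul (pow_ne_zero _ (X_add_C_ne_zero _)) (pow_ne_zero _ (X_add_C_ne_zero _))]
  · simp only [natDegree_pow, natDegree_X_add_C]
    omega

lemma pk_monic : (pk m k z₁ s).Monic := by
  exact ((monic_X_add_C _).pow _).mul ((monic_X_add_C _).pow _)

lemma pk_coeff_top (hk : k ≤ m) : (pk m k z₁ s).coeff m = 1 := by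
  have := (pk_monic m k z₁ s).leadingCoeff
  rwa [leadingCoeff, pk_natDegree m k z₁ s hk] at this

lemma pk_coeff_succ (hk : k ≤ m) : (pk m k z₁ s).coeff (m+1) = 0 :=
  coeff_eq_zero_of_natDegree_lt (by rw [pk_natDegree m k z₁ s hk]; omega)

lemma vk_ne_zero (hk : k ≤ m) : vk m k z₁ s ≠ 0 := by
  intro h
  have h0 := congrFun h 0
  simp only [vk, Fin.val_zero, Nat.sub_zero, pk_coeff_top m k z₁ s hk, Pi.zero_apply,
    Nat.factorial_zero, Nat.cast_one, one_mul, mul_one] at h0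
  exact (Nat.cast_ne_zero (R := ℂ)).mpr m.factorial_ne_zero h0

lemma eigen_row (hk : k ≤ m) (hs : s^2 = 1 + z₁^2) (i : Fin (m+1)) :
    z₀ * vk m k z₁ s i + z₁ * ((m:ℂ) - 2*(i:ℕ)) * vk m k z₁ s i
      + ((m:ℂ) - (i:ℕ)) * vk m k z₁ s (⟨min ((i:ℕ)+1) m, by omega⟩ : Fin (m+1))
      + ((i:ℕ):ℂ) * vk m k z₁ s (⟨(i:ℕ) - 1, by omega⟩ : Fin (m+1))
    = (z₀ + ((m:ℂ) - 2*(k:ℕ))*s) * vk m k z₁ s i := by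
  obtain ⟨H0, H1⟩ := coeff_rel (pk m k z₁ s) (2*z₁) (((m:ℂ) - 2*k)*s + (m:ℂ)*z₁) (m:ℂ)
    (step1 m k hk z₁ s hs)
  set c : ℕ → ℂ := fun j => (pk m k z₁ s).coeff j with hc
  set n := (i:ℕ) with hn
  have hz : c (m+1) = 0 := pk_coeff_succ m k z₁ s hk
  rcases lt_or_ge n m with hi | hi
  · -- i < m
    have hisucc : (⟨min (n+1) m, by omega⟩ : Fin (m+1)) = ⟨n+1, by omega⟩ :=
      Fin.ext (by simp only [Fin.val_mk]; omega)
    rw [hisucc]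
    have h1 := H1 (m - n - 1)
    -- cast facts
    have hc1 : ((m-n:ℕ):ℂ) = (m:ℂ) - n := by
      rw [Nat.cast_sub hi.le]
    have hc2 : ((m-n-1:ℕ):ℂ) = (m:ℂ) - n - 1 := by
      rw [Nat.cast_sub (by omega : 1 ≤ m - n), hc1, Nat.cast_one]
    -- factorial facts
    set A : ℂ := (n.factorial : ℂ) with hA
    set B : ℂ := ((m-n-1).factorial : ℂ) with hB
    have hf1 : (((n+1).factorial:ℕ):ℂ) = ((n:ℂ)+1) * A := by
      rw [Nat.factorial_succ]; push_cast; ring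
    have hf2 : (((m-n).factorial:ℕ):ℂ) = ((m:ℂ) - n) * B := by
      rw [show m-n = (m-n-1)+1 by omega, Nat.factorial_succ]
      push_cast [hc2]; ring
    -- index arithmetic
    have hidx1 : m - (n+1) = m - n - 1 := rfl
    -- rewrite the four terms
    have t1 : vk m k z₁ s i = c (m-n) * A * (((m:ℂ) - n) * B) := by
      show c (m-n) * A * (((m-n).factorial:ℕ):ℂ) = _
      rw [hf2]
    have t3 : vk m k z₁ s ⟨n+1, by omega⟩
        = c (m-n-1) * (((n:ℂ)+1) * A) * B := by
      show c (m-(n+1)) * (((n+1).factorial:ℕ):ℂ) * (((m-(n+1)).factorial:ℕ):ℂ) = _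
      rw [hidx1, hf1]
    have t4 : ((n:ℕ):ℂ) * vk m k z₁ s ⟨n - 1, by omega⟩
        = c (m-n+1) * A * ((((m:ℂ) - n) + 1) * (((m:ℂ) - n) * B)) := by
      rcases Nat.eq_zero_or_pos n with h0 | h0
      · have e1 : m - n + 1 = m + 1 := by omega
        rw [e1, hz]
        have hcast : ((n:ℕ):ℂ) = 0 := by rw [h0]; simp
        rw [hcast]
        ring
      · show ((n:ℕ):ℂ) * (c (m-(n-1)) * (((n-1).factorial:ℕ):ℂ)
          * (((m-(n-1)).factorial:ℕ):ℂ)) = _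
        have e1 : m - (n-1) = (m - n) + 1 := by omega
        have hf4 : ((n:ℕ):ℂ) * (((n-1).factorial:ℕ):ℂ) = A := by
          rw [hA, show n = (n-1)+1 by omega, Nat.factorial_succ]
          push_cast; ring
        rw [e1]
        have hf3 : (((m-n+1).factorial:ℕ):ℂ) = (((m:ℂ) - n) + 1) * (((m:ℂ) - n) * B) := by
          rw [Nat.factorial_succ, Nat.cast_mul, hf2]
          push_cast [hc1]; ring
        rw [← hf3]
        linear_combination (c (m-n+1) * (((m-n+1).factorial:ℕ):ℂ)) * hf4
    rw [t1, t3, t4]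
    rw [hc2] at h1
    rw [show m - n - 1 + 2 = m - n + 1 by omega, show m - n - 1 + 1 = m - n by omega] at h1
    linear_combination (((m:ℂ) - n) * A * B) * h1
  · -- i = m
    have him : n = m := by omega
    have hisucc : (⟨min (n+1) m, by omega⟩ : Fin (m+1)) = ⟨m, by omega⟩ :=
      Fin.ext (by simp only [Fin.val_mk]; omega)
    rw [hisucc]
    have hmc : ((n:ℕ):ℂ) = (m:ℂ) := by rw [him]
    rcases Nat.eq_zero_or_pos m with hm0 | hm0
    · have hk0 : k = 0 := by omega
      subst hm0; subst hk0
      have hrw : ∀ a : Fin 1, vk 0 0 z₁ s a = vk 0 0 z₁ s i :=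
        fun a => congrArg _ (Subsingleton.elim a i)
      rw [hrw, hrw]
      have hcast : ((i:ℕ):ℂ) = 0 := by
        have : (i:ℕ) = 0 := by omega
        rw [this]; simp
      rw [hcast]
      push_cast
      ring
    · -- m ≥ 1
      have t1 : vk m k z₁ s i = c 0 * (m.factorial : ℂ) := by
        show c (m-n) * ((n.factorial:ℕ):ℂ) * (((m-n).factorial:ℕ):ℂ) = _
        rw [him, Nat.sub_self]
        simp [him]
      have t4 : ((n:ℕ):ℂ) * vk m k z₁ s ⟨n - 1, by omega⟩
          = c 1 * (m.factorial : ℂ) := by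
        show ((n:ℕ):ℂ) * (c (m-(n-1)) * (((n-1).factorial:ℕ):ℂ)
          * (((m-(n-1)).factorial:ℕ):ℂ)) = _
        rw [him, show m - (m-1) = 1 by omega]
        have hC : ((m:ℕ):ℂ) * (((m-1).factorial:ℕ):ℂ) = ((m.factorial:ℕ):ℂ) := by
          exact_mod_cast congrArg (Nat.cast (R := ℂ)) (Nat.mul_factorial_pred hm0.ne')
        rw [Nat.factorial_one]
        linear_combination (c 1) * hC
      rw [t1, t4, hmc]
      linear_combination (m.factorial : ℂ) * H0


lemma eigen_mulVec (hk : k ≤ m) (hs : s^2 = 1 + z₁^2) :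
    (z₀ • (1 : Matrix (Fin (m+1)) (Fin (m+1)) ℂ) + z₁ • phiH m + phiE m + phiF m).mulVec
        (vk m k z₁ s)
      = (z₀ + ((m:ℂ) - 2*(k:ℕ))*s) • vk m k z₁ s := by
  funext i
  rw [Matrix.add_mulVec, Matrix.add_mulVec, Matrix.add_mulVec]
  simp only [Pi.add_apply, Matrix.smul_mulVec, Matrix.one_mulVec, Pi.smul_apply,
    smul_eq_mul, mulVec_phiE, mulVec_phiF, phiH, Matrix.mulVec_diagonal]
  linear_combination eigen_row m k z₀ z₁ s hk hs i

lemma generic_det (hs : s^2 = 1 + z₁^2) (hs0 : s ≠ 0) :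
    (z₀ • (1 : Matrix (Fin (m+1)) (Fin (m+1)) ℂ) + z₁ • phiH m + phiE m + phiF m).det
      = ∏ k : Fin (m+1), (z₀ + ((m:ℂ) - 2*(k:ℕ))*s) := by
  set M := z₀ • (1 : Matrix (Fin (m+1)) (Fin (m+1)) ℂ) + z₁ • phiH m + phiE m + phiF m with hM
  set lam : Fin (m+1) → ℂ := fun k => z₀ + ((m:ℂ) - 2*(k:ℕ))*s with hlam
  set V : Matrix (Fin (m+1)) (Fin (m+1)) ℂ := Matrix.of fun i k => vk m (k:ℕ) z₁ s i with hV
  have hMV : M * V = V * Matrix.diagonal lam := by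
    ext i k
    rw [Matrix.mul_apply, Matrix.mul_diagonal]
    have h := congrFun (eigen_mulVec m (k:ℕ) z₀ z₁ s (by omega) hs) i
    simp only [Pi.smul_apply, smul_eq_mul] at h
    calc ∑ j, M i j * V j k = M.mulVec (vk m (k:ℕ) z₁ s) i := rfl
      _ = lam k * vk m (k:ℕ) z₁ s i := h
      _ = V i k * lam k := by rw [mul_comm]; rfl
  have hinj : Function.Injective lam := by
    intro a b hab
    have h2 : ((a:ℕ):ℂ) = ((b:ℕ):ℂ) := by
      apply mul_left_cancel₀ (mul_ne_zero (two_ne_zero) hs0)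
      linear_combination -hab
    exact Fin.ext (Nat.cast_injective h2)
  have hunit : IsUnit V := by
    rw [← Matrix.linearIndependent_cols_iff_isUnit]
    have heq : V.col = fun k : Fin (m+1) => vk m (k:ℕ) z₁ s := rfl
    rw [heq]
    apply Module.End.eigenvectors_linearIndependent' (Matrix.mulVecLin M) lam hinj
    intro k
    constructor
    · rw [Module.End.mem_eigenspace_iff]
      exact eigen_mulVec m (k:ℕ) z₀ z₁ s (by omega) hs
    · exact vk_ne_zero m (k:ℕ) z₁ s (by omega)
  have hdet := congrArg Matrix.det hMV
  rw [Matrix.det_mul, Matrix.det_mul, Matrix.det_diagonal] at hdet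
  have hdV : IsUnit V.det := (Matrix.isUnit_iff_isUnit_det V).mp hunit
  rw [mul_comm V.det _] at hdet
  exact mul_right_cancel₀ hdV.ne_zero hdet

end Eigen

section Glob
variable (m : ℕ) (z₀ : ℂ)

/-- polynomial-entry matrix in the parameter `a` -/
noncomputable def Np : Matrix (Fin (m+1)) (Fin (m+1)) (Polynomial ℂ) :=
  Matrix.of fun i j =>
    (if i = j then C z₀ * X + C (((m:ℂ) - 2*(i:ℕ))/2) * (1 - X^2) else 0)
    + (if (i:ℕ)+1 = (j:ℕ) then C ((m:ℂ) - ((j:ℕ):ℂ) + 1) * X else 0)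
    + (if (j:ℕ)+1 = (i:ℕ) then C (((j:ℕ):ℂ)+1) * X else 0)

lemma Np_map (a : ℂ) (ha : a ≠ 0) :
    (Np m z₀).map (eval a)
      = a • (z₀ • (1 : Matrix (Fin (m+1)) (Fin (m+1)) ℂ)
          + ((1/a - a)/2) • phiH m + phiE m + phiF m) := by
  ext i j
  simp only [Np, Matrix.map_apply, Matrix.of_apply, Matrix.smul_apply, Matrix.add_apply,
    Matrix.one_apply, phiH, phiE, phiF, Matrix.diagonal_apply, smul_eq_mul]
  split_ifs with h1 h2 h3 h2 h3 <;>
  · try simp only [eval_add, eval_mul, eval_C, eval_X, eval_one, eval_sub, eval_pow, eval_zero,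
      add_zero, zero_add, mul_zero, mul_one]
    try field_simp
    try ring
end Glob


end HuZhangAux

open Polynomial in
theorem hu_zhang_conjecture (m : ℕ) (z₀ z₁ s : ℂ) (hs : s ^ 2 = 1 + z₁ ^ 2) :
    (z₀ • (1 : Matrix (Fin (m + 1)) (Fin (m + 1)) ℂ) + z₁ • phiH m + phiE m + phiF m).det
      = ∏ i ∈ Finset.range (m + 1), (z₀ + ((m : ℂ) - 2 * i) * s) := by
  set Q : Polynomial ℂ :=
    ∏ k ∈ Finset.range (m+1), (C z₀ * X + C (((m:ℂ) - 2*(k:ℕ))/2) * (1 + X^2)) with hQ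
  have key : (Np m z₀).det = Q := by
    apply eq_of_infinite_eval_eq
    apply Set.Infinite.mono (s := {a : ℂ | a ≠ 0 ∧ a^2 ≠ -1})
    · -- subset
      rintro a ⟨ha0, ha1⟩
      show eval a (Np m z₀).det = eval a Q
      set w : ℂ := (1/a - a)/2 with hw
      set s' : ℂ := (1/a + a)/2 with hs'
      have hss : s'^2 = 1 + w^2 := by
        rw [hs', hw]; field_simp; ring
      have hs'0 : s' ≠ 0 := by
        rw [hs']
        intro h
        apply ha1
        field_simp at h
        linear_combination h
      have h1 : eval a (Np m z₀).det = ((Np m z₀).map (eval a)).det :=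
        RingHom.map_det (evalRingHom a) (Np m z₀)
      rw [h1, Np_map m z₀ a ha0, Matrix.det_smul, generic_det m z₀ w s' hss hs'0]
      rw [hQ, eval_prod]
      rw [Fintype.card_fin]
      rw [← Fin.prod_univ_eq_prod_range
        (fun k => eval a (C z₀ * X + C (((m:ℂ) - 2*(k:ℕ))/2) * (1 + X^2)))]
      rw [show (a:ℂ)^(m+1) = ∏ _k : Fin (m+1), a from by
        rw [Finset.prod_const, Finset.card_univ, Fintype.card_fin]]
      rw [← Finset.prod_mul_distrib]
      apply Finset.prod_congr rfl
      intro k _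
      simp only [eval_add, eval_mul, eval_C, eval_X, eval_one, eval_pow]
      rw [hs']
      have hinv : a * a⁻¹ = 1 := mul_inv_cancel₀ ha0
      linear_combination (((m:ℂ) - 2*(k:ℕ))/2) * hinv
    · -- infinite
      have hsub : {a : ℂ | a = 0 ∨ a^2 = -1} ⊆ {0, Complex.I, -Complex.I} := by
        rintro a (h | h)
        · simp [h]
        · have hI : (a - Complex.I) * (a + Complex.I) = 0 := by
            linear_combination h - Complex.I_sq
          rcases mul_eq_zero.mp hI with h' | h'
          · have : a = Complex.I := by linear_combination h'
            simp [this]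
          · have : a = -Complex.I := by linear_combination h'
            simp [this]
      have hfin : Set.Finite {a : ℂ | a = 0 ∨ a^2 = -1} :=
        Set.Finite.subset (Set.toFinite _) hsub
      have : {a : ℂ | a ≠ 0 ∧ a^2 ≠ -1} = {a : ℂ | a = 0 ∨ a^2 = -1}ᶜ := by
        ext a; simp [not_or]
      rw [this]
      exact hfin.infinite_compl
  -- now evaluate at a₀ = s - z₁
  have hmul : (s - z₁) * (s + z₁) = 1 := by linear_combination hs
  have ha : s - z₁ ≠ 0 := by
    intro h; rw [h, zero_mul] at hmul; exact zero_ne_one hmul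
  have hkey := congrArg (eval (s - z₁)) key
  have h1 : eval (s - z₁) (Np m z₀).det = ((Np m z₀).map (eval (s - z₁))).det :=
    RingHom.map_det (evalRingHom (s - z₁)) (Np m z₀)
  rw [h1, Np_map m z₀ _ ha, Matrix.det_smul, Fintype.card_fin] at hkey
  have hww : (1/(s - z₁) - (s - z₁))/2 = z₁ := by
    field_simp
    linear_combination -hs
  rw [hww, hQ, eval_prod] at hkey
  apply mul_left_cancel₀ (pow_ne_zero (m+1) ha)
  rw [hkey]
  rw [← Fin.prod_univ_eq_prod_range
    (fun k => eval (s - z₁) (C z₀ * X + C (((m:ℂ) - 2*(k:ℕ))/2) * (1 + X^2)))]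
  rw [← Fin.prod_univ_eq_prod_range (fun k => z₀ + ((m:ℂ) - 2*(k:ℕ)) * s)]
  rw [show ((s - z₁):ℂ)^(m+1) = ∏ _k : Fin (m+1), (s - z₁) from by
    rw [Finset.prod_const, Finset.card_univ, Fintype.card_fin]]
  rw [← Finset.prod_mul_distrib]
  apply Finset.prod_congr rfl
  intro k _
  simp only [eval_add, eval_mul, eval_C, eval_X, eval_one, eval_pow]
  linear_combination (-((m:ℂ) - 2*(k:ℕ))/2) * hs
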